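/- arXiv:2502.00274 — 2 statements merged into one kernel-verified Lean document; each statement's English description precedes it below -/
import Mathlib

section
/- Let λ > 0, θ ∈ (0,1], and M_U the MGF of a nonnegative random variable. Then the function M_A(s) = M_U(s-θλ) M_Y(s) / M_U(-θλ), with M_Y(s) = λ(θλ-s)M_U(s-θλ)/((λ-s)(θλ M_U(s-θλ)-s)), satisfies: its derivative at s = 0 (by continuous extension) equals Ā = (M_U(-θλ)(θ-1) + λθ M_U'(-θλ) + 1)/(θλ M_U(-θλ)). -/
/-- The MGF of the peak AoI, `M_A(s) = M_U(s-θλ) M_Y(s) / M_U(-θλ)` with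
`M_Y(s) = λ(θλ-s)M_U(s-θλ)/((λ-s)(θλ M_U(s-θλ)-s))`, has derivative at `s = 0` equal to
`Ā = (M_U(-θλ)(θ-1) + λθ M_U'(-θλ) + 1)/(θλ M_U(-θλ))`. -/
theorem stmt_10 (lam θ : ℝ) (M : ℝ → ℝ) (M' : ℝ)
    (hlam : 0 < lam) (hθ : θ ∈ Set.Ioc (0:ℝ) 1)
    (hM_pos : 0 < M (-(θ * lam)))
    (hMderiv : HasDerivAt M M' (-(θ * lam))) :
    HasDerivAt (fun s => M (s - θ * lam) *
        (lam * (θ * lam - s) * M (s - θ * lam) /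
          ((lam - s) * (θ * lam * M (s - θ * lam) - s))) / M (-(θ * lam)))
      ((M (-(θ * lam)) * (θ - 1) + lam * θ * M' + 1) / (θ * lam * M (-(θ * lam)))) 0 := by
  obtain ⟨hθ0, hθ1⟩ := hθ
  set M0 := M (-(θ * lam)) with hM0
  have hf : HasDerivAt (fun s => M (s - θ * lam)) M' 0 := by
    have h2 : HasDerivAt M M' ((fun s : ℝ => s - θ * lam) 0) := by simpa using hMderiv
    simpa [Function.comp_def] using h2.comp 0 ((hasDerivAt_id (0:ℝ)).sub_const (θ * lam))
  have hf0 : M (0 - θ * lam) = M0 := by rw [zero_sub, hM0]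
  have hN : HasDerivAt (fun s => lam * (θ * lam - s) * (M (s - θ * lam) * M (s - θ * lam)))
      (lam * (0 - 1) * (M0 * M0) + lam * (θ * lam - 0) * (M' * M0 + M0 * M')) 0 := by
    have h1 : HasDerivAt (fun s : ℝ => lam * (θ * lam - s)) (lam * (0 - 1)) 0 :=
      (((hasDerivAt_const (0:ℝ) (θ*lam)).sub (hasDerivAt_id 0)).const_mul lam)
    have h2 := hf.mul hf
    have := h1.mul h2
    simpa [hf0, ← hM0, Pi.mul_def] using this
  have hD : HasDerivAt (fun s => (lam - s) * (θ * lam * M (s - θ * lam) - s) * M0)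
      (((0 - 1) * (θ * lam * M0 - 0) + (lam - 0) * (θ * lam * M' - 1)) * M0) 0 := by
    have h1 : HasDerivAt (fun s : ℝ => lam - s) (0 - 1) 0 :=
      (hasDerivAt_const (0:ℝ) lam).sub (hasDerivAt_id 0)
    have h2 : HasDerivAt (fun s : ℝ => θ * lam * M (s - θ * lam) - s) (θ * lam * M' - 1) 0 :=
      (hf.const_mul (θ*lam)).sub (hasDerivAt_id 0)
    have := (h1.mul h2).mul_const M0
    simpa [hf0] using this
  have hD0 : (lam - 0) * (θ * lam * M (0 - θ * lam) - 0) * M0 ≠ 0 := by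
    rw [hf0]
    have : 0 < θ * lam * M0 := by positivity
    nlinarith
  have hND := hN.div hD hD0
  have heq : (fun s => M (s - θ * lam) *
        (lam * (θ * lam - s) * M (s - θ * lam) /
          ((lam - s) * (θ * lam * M (s - θ * lam) - s))) / M0)
      = (fun s => lam * (θ * lam - s) * (M (s - θ * lam) * M (s - θ * lam)) /
          ((lam - s) * (θ * lam * M (s - θ * lam) - s) * M0)) := by
    funext s
    simp only [div_eq_mul_inv, mul_inv]
    ring
  rw [heq]
  convert hND using 1
  case e'_4 => rfl
  case e'_5 => rfl
  case e'_8 => rfl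
  rw [hf0]
  have hM0ne : M0 ≠ 0 := ne_of_gt hM_pos
  have hlne : lam ≠ 0 := ne_of_gt hlam
  have hθne : θ ≠ 0 := ne_of_gt hθ0
  field_simp
  ring
end

section
/- Let λ > 0, θ ∈ (0,1], and M_U the MGF of a nonnegative random variable with finite second moment and 0 < M_U(-θλ) < 1. Define M_δ(s) = M_U(s-θλ)(M_Y(s)-1)/(s M_U(-θλ) Ȳ) with M_Y(s) = λ(θλ-s)M_U(s-θλ)/((λ-s)(θλ M_U(s-θλ)-s)) and Ȳ = M_Y'(0). Then the derivative of M_δ at 0 (continuous extension) equals Δ = [M_U(-θλ)((θ²-θ)(M_U(-θλ) + λ M_U'(-θλ)) + θ - 1) + 1] / [λ M_U(-θλ)²(θ²-θ) + λ M_U(-θλ) θ]. -/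
open Topology Filter


/-- The average AoI as the derivative at `0` of the continuous extension of
`M_δ(s) = M_U(s-θλ)(M_Y(s)-1)/(s M_U(-θλ) Ȳ)`, where
`M_Y(s) = λ(θλ-s)M_U(s-θλ)/((λ-s)(θλ M_U(s-θλ)-s))` and `Ȳ = M_Y'(0)`:
it equals `Δ = [M_U(-θλ)((θ²-θ)(M_U(-θλ) + λ M_U'(-θλ)) + θ - 1) + 1] /
[λ M_U(-θλ)²(θ²-θ) + λ M_U(-θλ) θ]`. -/
theorem stmt_15 (lam θ : ℝ) (M : ℝ → ℝ)
    (hlam : 0 < lam) (hθ : θ ∈ Set.Ioc (0:ℝ) 1)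
    (hM_pos : 0 < M (-(θ * lam))) (hM_lt : M (-(θ * lam)) < 1)
    (hM_smooth : ContDiffAt ℝ 2 M (-(θ * lam))) :
    let MY : ℝ → ℝ := fun s => lam * (θ * lam - s) * M (s - θ * lam) /
      ((lam - s) * (θ * lam * M (s - θ * lam) - s))
    let Ybar : ℝ := deriv MY 0
    HasDerivAt (fun s : ℝ =>
        if s = 0 then 1
        else M (s - θ * lam) * (MY s - 1) / (s * M (-(θ * lam)) * Ybar))
      ((M (-(θ * lam)) * ((θ ^ 2 - θ) * (M (-(θ * lam)) + lam * deriv M (-(θ * lam)))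
          + θ - 1) + 1) /
        (lam * M (-(θ * lam)) ^ 2 * (θ ^ 2 - θ) + lam * M (-(θ * lam)) * θ)) 0 := by
  obtain ⟨hθ0, hθ1⟩ := hθ
  intro MY Ybar
  have hMY : ∀ s : ℝ, MY s = lam * (θ * lam - s) * M (s - θ * lam) /
      ((lam - s) * (θ * lam * M (s - θ * lam) - s)) := fun s => rfl
  have hYbar : Ybar = deriv MY 0 := rfl
  clear_value MY Ybar
  have hθlam : 0 < θ * lam := mul_pos hθ0 hlam
  have hM0ne : M (-(θ * lam)) ≠ 0 := ne_of_gt hM_pos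
  have hc : 0 < 1 - M (-(θ * lam)) + θ * M (-(θ * lam)) := by
    nlinarith [mul_pos hθ0 hM_pos]
  have hcne : 1 - M (-(θ * lam)) + θ * M (-(θ * lam)) ≠ 0 := ne_of_gt hc
  -- derivative of s ↦ M (s - θ*lam) at 0
  have hmd : HasDerivAt (fun s : ℝ => M (s - θ * lam)) (deriv M (-(θ * lam))) 0 := by
    have h1 : HasDerivAt (fun s : ℝ => s - θ * lam) 1 0 := (hasDerivAt_id 0).sub_const _
    have h2 : HasDerivAt M (deriv M (-(θ * lam))) ((fun s : ℝ => s - θ * lam) 0) := by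
      simpa using (hM_smooth.differentiableAt (by norm_num)).hasDerivAt
    simpa [Function.comp_def] using h2.comp 0 h1
  have hm0 : M ((0:ℝ) - θ * lam) = M (-(θ * lam)) := by norm_num
  -- derivative of D
  have hDd := ((hasDerivAt_const (0:ℝ) lam).sub (hasDerivAt_id' 0)).mul
      ((hmd.const_mul (θ * lam)).sub (hasDerivAt_id' 0))
  have hD0ne : (lam - 0) * (θ * lam * M ((0:ℝ) - θ * lam) - 0) ≠ 0 := by
    simp only [hm0, sub_zero]; positivity
  have hevD : ∀ᶠ s in 𝓝 (0:ℝ), (lam - s) * (θ * lam * M (s - θ * lam) - s) ≠ 0 :=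
    hDd.continuousAt.eventually_ne hD0ne
  -- derivative of N
  have hNd := ((((hasDerivAt_const (0:ℝ) (1:ℝ)).sub hmd).const_mul lam).add
      (hmd.const_mul (θ * lam))).sub (hasDerivAt_id' 0)
  -- MY near 0
  have hq := hNd.div hDd hD0ne
  have hMY2 := ((hasDerivAt_const (0:ℝ) (1:ℝ)).add
      ((hasDerivAt_id' 0).mul hq)).congr_of_eventuallyEq (f₁ := MY) (by
    filter_upwards [hevD] with s hs
    obtain ⟨h1, h2⟩ := mul_ne_zero_iff.mp hs
    rw [hMY s]
    simp only [Pi.add_apply, Pi.mul_apply, Pi.sub_apply, Pi.div_apply]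
    rw [div_eq_iff hs, add_mul, mul_assoc s, div_mul_cancel₀ _ hs]
    ring)
  have hYval : Ybar = (1 - M (-(θ * lam)) + θ * M (-(θ * lam))) / (θ * lam * M (-(θ * lam))) := by
    rw [hYbar, hMY2.deriv]
    simp only [Pi.add_apply, Pi.mul_apply, Pi.sub_apply, Pi.div_apply, hm0, mul_zero, zero_mul, sub_zero, zero_add, add_zero, one_mul]
    field_simp
  have hYne : Ybar ≠ 0 := by
    rw [hYval]
    exact ne_of_gt (div_pos hc (by positivity))
  -- eventual equality with the smooth version
  have hden0 : (lam - 0) * (θ * lam * M ((0:ℝ) - θ * lam) - 0) * (M (-(θ * lam)) * Ybar) ≠ 0 :=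
    mul_ne_zero hD0ne (mul_ne_zero hM0ne hYne)
  have hg := (hmd.mul hNd).div (hDd.mul_const (M (-(θ * lam)) * Ybar)) hden0
  have hfg : (fun s : ℝ => if s = 0 then 1
        else M (s - θ * lam) * (MY s - 1) / (s * M (-(θ * lam)) * Ybar)) =ᶠ[𝓝 (0:ℝ)]
      (fun s : ℝ => M (s - θ * lam) *
        (lam * (1 - M (s - θ * lam)) + θ * lam * M (s - θ * lam) - s) /
        ((lam - s) * (θ * lam * M (s - θ * lam) - s) * (M (-(θ * lam)) * Ybar))) := by
    filter_upwards [hevD] with s hs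
    obtain ⟨h1, h2⟩ := mul_ne_zero_iff.mp hs
    by_cases h0 : s = 0
    · subst h0
      simp only [↓reduceIte, hm0, hYval]
      field_simp
      ring
    · rw [if_neg h0, hMY s]
      field_simp
      ring
  have hF := hg.congr_of_eventuallyEq hfg
  refine hF.congr_deriv ?_
  symm
  rw [hYval]
  have hΔden : lam * M (-(θ * lam)) ^ 2 * (θ ^ 2 - θ) + lam * M (-(θ * lam)) * θ ≠ 0 := by
    have h : lam * M (-(θ * lam)) ^ 2 * (θ ^ 2 - θ) + lam * M (-(θ * lam)) * θ =
        lam * M (-(θ * lam)) * θ * (1 - M (-(θ * lam)) + θ * M (-(θ * lam))) := by ring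
    rw [h]
    exact ne_of_gt (by positivity)
  simp only [Pi.add_apply, Pi.mul_apply, Pi.sub_apply, Pi.div_apply, hm0, mul_zero, zero_mul, sub_zero, zero_add, add_zero, one_mul, zero_sub]
  have hcne' : M (-(θ * lam)) * (θ - 1) + 1 ≠ 0 := by
    intro h; apply hcne; linarith
  field_simp
  ring
end
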